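/- Let n ≥ 1 be a natural number, y ≥ 2 a real, and let π₁, π₂ : ℝ × ℝ → ℝ be measurable functions with values in [0,1]. Suppose (feasibility) ∫_{w=1}^{∞} (2/w³) · (∫_{v=w}^{∞} π₁(v,w)·(w/v²) dv) dw ≤ 2/n, and (incentive bound) π₁(v,w) ≥ π₂(v/3, y)/4 for all v ≥ 3y and all w ∈ [1, y]. Then ∫_{u=y}^{∞} π₂(u, y)·(y/u²) du ≤ 24·y/n. -/

import Mathlib

open MeasureTheory Set

lemma rpow_neg2_eq {x : ℝ} (hx0 : 0 < x) : x ^ ((-2:ℤ):ℝ) = 1 / x ^ 2 := by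
  rw [Real.rpow_intCast]; field_simp

lemma intOn_one_div_sq {c : ℝ} (hc : 0 < c) :
    IntegrableOn (fun v : ℝ => 1 / v ^ 2) (Set.Ioi c) := by
  apply (integrableOn_Ioi_rpow_of_lt (a := -2) (by norm_num) hc).congr_fun ?_ measurableSet_Ioi
  intro x hx
  show x ^ ((-2:ℝ)) = 1 / x ^ 2
  rw [show (-2:ℝ) = ((-2:ℤ):ℝ) by norm_num]
  exact rpow_neg2_eq (hc.trans hx)

lemma int_one_div_sq {c : ℝ} (hc : 0 < c) :
    ∫ v in Set.Ioi c, 1 / v ^ 2 = 1 / c := by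
  have h := integral_Ioi_rpow_of_lt (a := -2) (by norm_num) hc
  rw [setIntegral_congr_fun measurableSet_Ioi (g := fun t : ℝ => t ^ (-2:ℝ)) ?_, h]
  · rw [show (-2:ℝ) + 1 = -1 by norm_num, Real.rpow_neg_one]
    field_simp
  · intro x hx
    show 1 / x ^ 2 = x ^ ((-2:ℝ))
    rw [show (-2:ℝ) = ((-2:ℤ):ℝ) by norm_num, rpow_neg2_eq (hc.trans hx)]

lemma intOn_one_div_cube {c : ℝ} (hc : 0 < c) :
    IntegrableOn (fun v : ℝ => 1 / v ^ 3) (Set.Ioi c) := by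
  apply (integrableOn_Ioi_rpow_of_lt (a := -3) (by norm_num) hc).congr_fun ?_ measurableSet_Ioi
  intro x hx
  have hx0 : 0 < x := hc.trans hx
  show x ^ ((-3:ℝ)) = 1 / x ^ 3
  rw [show (-3:ℝ) = ((-3:ℤ):ℝ) by norm_num, Real.rpow_intCast]
  field_simp

/-- given the feasibility bound on the expected allocation of item 1 and the
BIC-derived incentive bound `π₁(v,w) ≥ π₂(v/3, y)/4` for `v ≥ 3y`, `w ∈ [1,y]`, the
conditional probability of receiving item 2 given value `y` for it is at most `24y/n`. -/
theorem nonfavorite_alloc_bound (n : ℕ) (hn : 1 ≤ n) (y : ℝ) (hy : 2 ≤ y)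
    (π₁ π₂ : ℝ × ℝ → ℝ)
    (hπ₁meas : Measurable π₁) (hπ₂meas : Measurable π₂)
    (hπ₁01 : ∀ p, π₁ p ∈ Set.Icc (0 : ℝ) 1) (hπ₂01 : ∀ p, π₂ p ∈ Set.Icc (0 : ℝ) 1)
    (hfeas : (∫ w in Set.Ici (1 : ℝ),
        (2 / w ^ 3) * ∫ v in Set.Ici w, π₁ (v, w) * (w / v ^ 2)) ≤ 2 / (n : ℝ))
    (hinc : ∀ v w : ℝ, 3 * y ≤ v → w ∈ Set.Icc (1 : ℝ) y →
        π₂ (v / 3, y) / 4 ≤ π₁ (v, w)) :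
    (∫ u in Set.Ici y, π₂ (u, y) * (y / u ^ 2)) ≤ 24 * y / (n : ℝ) := by
  have hy0 : (0:ℝ) < y := by linarith
  have hn0 : (0:ℝ) < (n:ℝ) := by exact_mod_cast hn
  set J : ℝ := ∫ u in Ioi y, π₂ (u, y) * (1 / u ^ 2) with hJdef
  -- measurability and integrability of the π₂ integrand
  have hmeas2 : Measurable (fun u : ℝ => π₂ (u, y) * (1 / u ^ 2)) :=
    (hπ₂meas.comp (measurable_id.prodMk measurable_const)).mul
      (measurable_const.div (measurable_id.pow_const 2))
  have hint2 : IntegrableOn (fun u : ℝ => π₂ (u, y) * (1 / u ^ 2)) (Ioi y) := by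
    refine Integrable.mono' (intOn_one_div_sq hy0) hmeas2.aestronglyMeasurable.restrict ?_
    refine ae_of_all _ (fun u => ?_)
    have h2 := hπ₂01 (u, y)
    have hu2 : (0:ℝ) ≤ 1 / u ^ 2 := by positivity
    rw [Real.norm_eq_abs, abs_mul, abs_of_nonneg h2.1, abs_of_nonneg hu2]
    nlinarith [h2.2]
  -- change of variables : ∫_{3y}^∞ π₂(v/3,y)/v² = J/3
  have hfun : ∀ x : ℝ, π₂ ((1/3)*x, y) * (1/((1/3)*x) ^ 2)
      = 9 * (π₂ (x/3, y) * (1/x^2)) := by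
    intro x
    rw [show (1/3:ℝ)*x = x/3 by ring, div_pow, one_div_div]
    ring
  have hcv := integral_comp_mul_left_Ioi
      (fun u : ℝ => π₂ (u, y) * (1/u ^ 2)) (3*y) (b := (1/3)) (by norm_num)
  rw [show (1/3:ℝ)*(3*y) = y by ring] at hcv
  simp only [hfun, smul_eq_mul] at hcv
  rw [integral_const_mul] at hcv
  have hK : ∫ x in Ioi (3*y), π₂ (x/3, y) * (1/x^2) = J / 3 := by
    rw [hJdef]; norm_num at hcv ⊢; linarith
  -- integrability of the π₁ integrand
  have hmeas1 : ∀ w : ℝ, Measurable (fun v : ℝ => π₁ (v, w) * (w / v ^ 2)) := fun w =>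
    (hπ₁meas.comp (measurable_id.prodMk measurable_const)).mul
      (measurable_const.div (measurable_id.pow_const 2))
  have hint1 : ∀ w c : ℝ, 0 ≤ w → 0 < c →
      IntegrableOn (fun v : ℝ => π₁ (v, w) * (w / v ^ 2)) (Ioi c) := by
    intro w c hw hc
    refine Integrable.mono' ((intOn_one_div_sq hc).const_mul w)
      (hmeas1 w).aestronglyMeasurable.restrict ?_
    refine ae_of_all _ (fun v => ?_)
    have h1 := hπ₁01 (v, w)
    have hv2 : (0:ℝ) ≤ w / v ^ 2 := by positivity
    rw [Real.norm_eq_abs, abs_mul, abs_of_nonneg h1.1, abs_of_nonneg hv2]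
    have : w / v ^ 2 = w * (1 / v ^ 2) := by ring
    nlinarith [h1.2]
  have hnn1 : ∀ w : ℝ, 0 ≤ w → ∀ v : ℝ, 0 ≤ π₁ (v, w) * (w / v ^ 2) := by
    intro w hw v
    exact mul_nonneg (hπ₁01 _).1 (by positivity)
  -- Step A
  have stepA : ∀ w ∈ Icc (1:ℝ) 2,
      (w/12) * J ≤ ∫ v in Ici w, π₁ (v, w) * (w / v ^ 2) := by
    rintro w ⟨hw1, hw2⟩
    have hw0 : (0:ℝ) < w := lt_of_lt_of_le zero_lt_one hw1
    have h3y : (0:ℝ) < 3*y := by linarith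
    have hintlow : IntegrableOn (fun v : ℝ => π₂ (v/3, y)/4 * (w / v ^ 2)) (Ioi (3*y)) := by
      refine Integrable.mono' ((intOn_one_div_sq h3y).const_mul w)
        (((((hπ₂meas.comp ((measurable_id.div_const 3).prodMk
          measurable_const))).div_const 4).mul
          (measurable_const.div (measurable_id.pow_const 2))).aestronglyMeasurable.restrict) ?_
      refine ae_of_all _ (fun v => ?_)
      have h2 := hπ₂01 (v/3, y)
      have hv2 : (0:ℝ) ≤ w / v ^ 2 := by positivity
      rw [Real.norm_eq_abs, abs_mul, abs_of_nonneg (by linarith [h2.1] : (0:ℝ) ≤ π₂ (v/3,y)/4),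
        abs_of_nonneg hv2]
      have : w / v ^ 2 = w * (1 / v ^ 2) := by ring
      nlinarith [h2.2, h2.1]
    have hmono : (∫ v in Ioi (3*y), π₂ (v/3, y)/4 * (w / v ^ 2))
        ≤ ∫ v in Ioi (3*y), π₁ (v, w) * (w / v ^ 2) := by
      refine setIntegral_mono_on hintlow (hint1 w (3*y) hw0.le h3y) measurableSet_Ioi ?_
      intro v hv
      exact mul_le_mul_of_nonneg_right (hinc v w (le_of_lt hv) ⟨hw1, by linarith⟩)
        (by positivity)
    have hcomp : (∫ v in Ioi (3*y), π₂ (v/3, y)/4 * (w / v ^ 2))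
        = (w/4) * ∫ v in Ioi (3*y), π₂ (v/3, y) * (1 / v ^ 2) := by
      rw [← integral_const_mul]
      congr 1; funext v; ring
    have hsub : (∫ v in Ioi (3*y), π₁ (v, w) * (w / v ^ 2))
        ≤ ∫ v in Ioi w, π₁ (v, w) * (w / v ^ 2) := by
      refine setIntegral_mono_set (hint1 w w hw0.le hw0) (ae_of_all _ (hnn1 w hw0.le))
        (HasSubset.Subset.eventuallyLE (Ioi_subset_Ioi (by linarith)))
    rw [integral_Ici_eq_integral_Ioi]
    calc (w/12) * J = (w/4) * (J/3) := by ring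
      _ = ∫ v in Ioi (3*y), π₂ (v/3, y)/4 * (w / v ^ 2) := by rw [hcomp, hK]
      _ ≤ ∫ v in Ioi (3*y), π₁ (v, w) * (w / v ^ 2) := hmono
      _ ≤ _ := hsub
  -- measurability of the outer integrand
  set F : ℝ × ℝ → ℝ := fun p => if p.1 ≤ p.2 then π₁ (p.2, p.1) * (p.1 / p.2 ^ 2) else 0
    with hFdef
  have hFmeas : Measurable F :=
    Measurable.ite (measurableSet_le measurable_fst measurable_snd)
      ((hπ₁meas.comp (measurable_snd.prodMk measurable_fst)).mul
        (measurable_fst.div (measurable_snd.pow_const 2))) measurable_const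
  have hG : ∀ w : ℝ, (∫ v, F (w, v)) = ∫ v in Ici w, π₁ (v, w) * (w / v ^ 2) := by
    intro w
    rw [← integral_indicator measurableSet_Ici]
    refine integral_congr_ae (ae_of_all _ fun v => ?_)
    simp [hFdef, Set.indicator_apply, Set.mem_Ici]
  set g : ℝ → ℝ := fun w => (2 / w ^ 3) * ∫ v in Ici w, π₁ (v, w) * (w / v ^ 2) with hgdef
  have hgSM : StronglyMeasurable g := by
    have : g = fun w => (2 / w ^ 3) * ∫ v, F (w, v) := by
      funext w; rw [hgdef, hG]
    rw [this]
    exact ((measurable_const.div (measurable_id.pow_const 3)).stronglyMeasurable).mul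
      hFmeas.stronglyMeasurable.integral_prod_right'
  -- bounds on the inner integral
  have hGnn : ∀ w : ℝ, 0 ≤ w → 0 ≤ ∫ v in Ici w, π₁ (v, w) * (w / v ^ 2) := fun w hw =>
    setIntegral_nonneg measurableSet_Ici (fun v _ => hnn1 w hw v)
  have hGle : ∀ w : ℝ, 1 ≤ w → (∫ v in Ici w, π₁ (v, w) * (w / v ^ 2)) ≤ 1 := by
    intro w hw1
    have hw0 : (0:ℝ) < w := lt_of_lt_of_le zero_lt_one hw1
    have hval : ∫ v in Ioi w, w * (1 / v ^ 2) = 1 := by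
      rw [integral_const_mul, int_one_div_sq hw0]
      field_simp
    rw [integral_Ici_eq_integral_Ioi, ← hval]
    refine setIntegral_mono_on (hint1 w w hw0.le hw0) ((intOn_one_div_sq hw0).const_mul w)
      measurableSet_Ioi ?_
    intro v hv
    have h1 := hπ₁01 (v, w)
    have hv2 : (0:ℝ) ≤ w / v ^ 2 := by positivity
    calc π₁ (v, w) * (w / v ^ 2) ≤ 1 * (w / v ^ 2) :=
          mul_le_mul_of_nonneg_right h1.2 hv2
      _ = w * (1 / v ^ 2) := by ring
  -- integrability of g on [1,∞)
  have hgint : IntegrableOn g (Ici 1) := by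
    rw [integrableOn_Ici_iff_integrableOn_Ioi]
    refine Integrable.mono' ((intOn_one_div_cube zero_lt_one).const_mul 2)
      hgSM.aestronglyMeasurable.restrict ?_
    filter_upwards [ae_restrict_mem measurableSet_Ioi] with w hw
    have hw1 : (1:ℝ) ≤ w := le_of_lt hw
    have hw0 : (0:ℝ) < w := lt_of_lt_of_le zero_lt_one hw1
    have hc : (0:ℝ) ≤ 2 / w ^ 3 := by positivity
    rw [hgdef, Real.norm_eq_abs, abs_mul, abs_of_nonneg hc, abs_of_nonneg (hGnn w hw0.le)]
    have h1 : (2 / w ^ 3) * (∫ v in Ici w, π₁ (v, w) * (w / v ^ 2)) ≤ (2 / w ^ 3) * 1 :=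
      mul_le_mul_of_nonneg_left (hGle w hw1) hc
    have : (2 / w ^ 3) * 1 = 2 * (1 / w ^ 3) := by ring
    linarith
  -- chain of inequalities
  have h2 : (∫ w in Ici (1:ℝ), g w) ≤ 2 / (n:ℝ) := hfeas
  have h1 : (∫ w in Icc (1:ℝ) 2, g w) ≤ ∫ w in Ici (1:ℝ), g w := by
    refine setIntegral_mono_set hgint ?_
      (HasSubset.Subset.eventuallyLE Icc_subset_Ici_self)
    filter_upwards [ae_restrict_mem measurableSet_Ici] with w hw
    have hw0 : (0:ℝ) < w := lt_of_lt_of_le zero_lt_one hw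
    exact mul_nonneg (by positivity) (hGnn w hw0.le)
  have hintJ : IntegrableOn (fun w : ℝ => (J/6) * (1 / w ^ 2)) (Icc 1 2) := by
    have h : IntegrableOn (fun w : ℝ => (J/6) * (1 / w ^ 2)) (Ioi (1/2)) :=
      (intOn_one_div_sq (by norm_num : (0:ℝ) < 1/2)).const_mul (J/6)
    exact h.mono_set (fun x hx => lt_of_lt_of_le (by norm_num) hx.1)
  have h3 : (∫ w in Icc (1:ℝ) 2, (J/6) * (1 / w ^ 2)) ≤ ∫ w in Icc (1:ℝ) 2, g w := by
    refine setIntegral_mono_on hintJ (hgint.mono_set Icc_subset_Ici_self)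
      measurableSet_Icc ?_
    intro w hw
    have hw0 : (0:ℝ) < w := lt_of_lt_of_le zero_lt_one hw.1
    have heq : (J/6) * (1 / w ^ 2) = (2 / w ^ 3) * ((w/12) * J) := by
      field_simp; ring
    rw [heq, hgdef]
    exact mul_le_mul_of_nonneg_left (stepA w hw) (by positivity)
  have h4 : (∫ w in Icc (1:ℝ) 2, (J/6) * (1 / w ^ 2)) = J / 12 := by
    have hval : ∫ w in Icc (1:ℝ) 2, (1 / w ^ 2) = 1/2 := by
      rw [MeasureTheory.integral_Icc_eq_integral_Ioc,
        ← intervalIntegral.integral_of_le (by norm_num : (1:ℝ) ≤ 2)]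
      have : ∀ x : ℝ, 1 / x ^ 2 = x ^ (-2:ℤ) := by
        intro x
        rw [one_div, ← zpow_natCast x 2, ← zpow_neg]
        norm_num
      simp_rw [this]
      rw [integral_zpow (by norm_num)]
      norm_num
    rw [integral_const_mul, hval]
    ring
  -- conclude
  have hJ : J ≤ 24 / (n:ℝ) := by
    have h5 := le_trans (le_trans (h4 ▸ h3) h1) h2
    rw [div_le_div_iff₀ (by norm_num) hn0] at h5
    rw [le_div_iff₀ hn0]
    linarith
  have hIJ : (∫ u in Ici y, π₂ (u, y) * (y / u ^ 2)) = y * J := by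
    rw [integral_Ici_eq_integral_Ioi, hJdef, ← integral_const_mul]
    congr 1; funext u; ring
  rw [hIJ]
  calc y * J ≤ y * (24 / (n:ℝ)) := mul_le_mul_of_nonneg_left hJ hy0.le
    _ = 24 * y / (n:ℝ) := by ring
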